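/- (i) If v₁, v₂, v₃, v₄ ∈ ℝ³ are four vectors any three of which are linearly independent, and X is a 3×3 real matrix such that X vₖ lies in the span of vₖ for each k = 1, 2, 3, 4, then X is a scalar multiple of the identity matrix. (ii) Consequently, if an affine realization (p, l) of an incidence geometry (P, L, I) has four points i₁, i₂, i₃, i₄ ∈ P such that any three of the homogenizations p̂(i₁), p̂(i₂), p̂(i₃), p̂(i₄) are linearly independent, then the space of trivial infinitesimal motions of (p, l) has dimension exactly 8. -/

import Mathlib

open Matrix

/-- Homogenization: `(v₁, v₂) ↦ (v₁, v₂, 1)`. -/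
def hat (v : Fin 2 → ℝ) : Fin 3 → ℝ := Fin.snoc v 1

/-- An affine realization of the incidence geometry `(P, L, I)`:
`l j ⬝ p i + 1 = 0` for every incidence `(i, j)`. -/
def IsAffRealization {P L : Type*} (I : Set (P × L))
    (p : P → Fin 2 → ℝ) (l : L → Fin 2 → ℝ) : Prop :=
  ∀ ij ∈ I, l ij.2 ⬝ᵥ p ij.1 + 1 = 0

/-- A trivial infinitesimal motion: the linearization of a projective transformation,
given by a `3 × 3` matrix `X`. -/
def IsTrivMotion {P L : Type*}
    (p : P → Fin 2 → ℝ) (l : L → Fin 2 → ℝ)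
    (dp : P → Fin 2 → ℝ) (dl : L → Fin 2 → ℝ) : Prop :=
  ∃ X : Matrix (Fin 3) (Fin 3) ℝ,
    (∀ i, dp i = Fin.init (X *ᵥ hat (p i)) - (X *ᵥ hat (p i)) 2 • p i) ∧
    (∀ j, dl j = -(Fin.init (Xᵀ *ᵥ hat (l j))) + (Xᵀ *ᵥ hat (l j)) 2 • l j)

/-! ### Auxiliary lemmas -/

lemma scalarOf (v : Fin 4 → Fin 3 → ℝ) (X : Matrix (Fin 3) (Fin 3) ℝ)
    (hind : ∀ k₁ k₂ k₃ : Fin 4, k₁ ≠ k₂ → k₁ ≠ k₃ → k₂ ≠ k₃ →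
      LinearIndependent ℝ ![v k₁, v k₂, v k₃])
    (heig : ∀ k, ∃ c : ℝ, X *ᵥ v k = c • v k) :
    ∃ c : ℝ, X = c • (1 : Matrix (Fin 3) (Fin 3) ℝ) := by
  choose c hc using heig
  have h012 : LinearIndependent ℝ ![v 0, v 1, v 2] := hind 0 1 2 (by decide) (by decide) (by decide)
  have hcard : Fintype.card (Fin 3) = Module.finrank ℝ (Fin 3 → ℝ) := by simp
  let b : Module.Basis (Fin 3) ℝ (Fin 3 → ℝ) :=
    basisOfLinearIndependentOfCardEqFinrank h012 hcard
  have hb : ⇑b = ![v 0, v 1, v 2] :=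
    coe_basisOfLinearIndependentOfCardEqFinrank h012 hcard
  set a : Fin 3 → ℝ := fun k => b.repr (v 3) k with ha
  have hv3 : v 3 = a 0 • v 0 + a 1 • v 1 + a 2 • v 2 := by
    have h := b.sum_repr (v 3)
    rw [Fin.sum_univ_three] at h
    rw [← h, hb]
    simp [a, hb]
  have key : ∀ g : Fin 3 → ℝ, g 0 • v 0 + g 1 • v 1 + g 2 • v 2 = 0 → ∀ m, g m = 0 := by
    intro g hg
    have := Fintype.linearIndependent_iff.mp h012 g (by
      rw [Fin.sum_univ_three]; simpa using hg)
    simpa using this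
  have ha0 : a 0 ≠ 0 := by
    intro hm
    have h := hind 1 2 3 (by decide) (by decide) (by decide)
    have := Fintype.linearIndependent_iff.mp h ![a 1, a 2, -1] (by
      rw [Fin.sum_univ_three]
      simp only [Matrix.cons_val_zero, Matrix.cons_val_one, Matrix.head_cons,
        Matrix.cons_val_two, Matrix.tail_cons]
      rw [hv3, hm]; module) 2
    simp at this
  have ha1 : a 1 ≠ 0 := by
    intro hm
    have h := hind 0 2 3 (by decide) (by decide) (by decide)
    have := Fintype.linearIndependent_iff.mp h ![a 0, a 2, -1] (by
      rw [Fin.sum_univ_three]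
      simp only [Matrix.cons_val_zero, Matrix.cons_val_one, Matrix.head_cons,
        Matrix.cons_val_two, Matrix.tail_cons]
      rw [hv3, hm]; module) 2
    simp at this
  have ha2 : a 2 ≠ 0 := by
    intro hm
    have h := hind 0 1 3 (by decide) (by decide) (by decide)
    have := Fintype.linearIndependent_iff.mp h ![a 0, a 1, -1] (by
      rw [Fin.sum_univ_three]
      simp only [Matrix.cons_val_zero, Matrix.cons_val_one, Matrix.head_cons,
        Matrix.cons_val_two, Matrix.tail_cons]
      rw [hv3, hm]; module) 2
    simp at this
  have h1 : X *ᵥ v 3 = (a 0 * c 0) • v 0 + (a 1 * c 1) • v 1 + (a 2 * c 2) • v 2 := by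
    conv_lhs => rw [hv3]
    rw [mulVec_add, mulVec_add, mulVec_smul, mulVec_smul, mulVec_smul, hc 0, hc 1, hc 2]
    module
  have h2 : X *ᵥ v 3 = (a 0 * c 3) • v 0 + (a 1 * c 3) • v 1 + (a 2 * c 3) • v 2 := by
    rw [hc 3, hv3]; module
  have hco := key ![a 0 * (c 0 - c 3), a 1 * (c 1 - c 3), a 2 * (c 2 - c 3)] (by
    simp only [Matrix.cons_val_zero, Matrix.cons_val_one, Matrix.head_cons,
      Matrix.cons_val_two, Matrix.tail_cons]
    rw [show (a 0 * (c 0 - c 3)) • v 0 + (a 1 * (c 1 - c 3)) • v 1 + (a 2 * (c 2 - c 3)) • v 2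
      = ((a 0 * c 0) • v 0 + (a 1 * c 1) • v 1 + (a 2 * c 2) • v 2)
       - ((a 0 * c 3) • v 0 + (a 1 * c 3) • v 1 + (a 2 * c 3) • v 2) by module,
      ← h1, ← h2]
    simp)
  have hc0 : c 0 = c 3 := by
    have := hco 0; simp at this
    rcases this with h | h; exact absurd h ha0; linarith
  have hc1 : c 1 = c 3 := by
    have := hco 1; simp at this
    rcases this with h | h; exact absurd h ha1; linarith
  have hc2 : c 2 = c 3 := by
    have := hco 2; simp at this
    rcases this with h | h; exact absurd h ha2; linarith
  refine ⟨c 3, ?_⟩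
  have hlin : X.mulVecLin = (c 3) • LinearMap.id := by
    apply b.ext
    intro k
    rw [hb]
    fin_cases k
    · simpa [hc0] using hc 0
    · simpa [hc1] using hc 1
    · simpa [hc2] using hc 2
  ext i j
  have h3 := LinearMap.congr_fun hlin (Pi.single j 1)
  simp only [mulVecLin_apply] at h3
  have h := congrFun h3 i
  simpa [Matrix.mulVec_single, Matrix.one_apply, Pi.single_apply, mul_comm] using h

lemma two_eq_last : (2 : Fin 3) = Fin.last 2 := by decide

lemma hat_init (v : Fin 2 → ℝ) : Fin.init (hat v) = v := by simp [hat]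

lemma hat_two (v : Fin 2 → ℝ) : hat v 2 = 1 := by
  rw [hat, two_eq_last, Fin.snoc_last]

lemma init_smul' (c : ℝ) (u : Fin 3 → ℝ) : Fin.init (c • u) = c • Fin.init u := by
  funext x; simp [Fin.init]

lemma eig_of (w : Fin 2 → ℝ) (u : Fin 3 → ℝ) (h : Fin.init u = u 2 • w) :
    u = u 2 • hat w := by
  funext m
  refine Fin.lastCases ?_ ?_ m
  · rw [← two_eq_last]; simp [hat_two]
  · intro m
    have := congrFun h m
    simp only [Fin.init, Pi.smul_apply, smul_eq_mul] at this
    simp [hat, Fin.snoc_castSucc, this]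

/-- The linear map sending a `3 × 3` matrix to the associated trivial motion. -/
noncomputable def motionMap {P L : Type*} (p : P → Fin 2 → ℝ) (l : L → Fin 2 → ℝ) :
    Matrix (Fin 3) (Fin 3) ℝ →ₗ[ℝ] (P → Fin 2 → ℝ) × (L → Fin 2 → ℝ) where
  toFun X := (fun i => Fin.init (X *ᵥ hat (p i)) - (X *ᵥ hat (p i)) 2 • p i,
              fun j => -(Fin.init (Xᵀ *ᵥ hat (l j))) + (Xᵀ *ᵥ hat (l j)) 2 • l j)
  map_add' X Y := by
    ext i x <;>
    · simp [Matrix.add_mulVec, Matrix.transpose_add, Fin.init]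
      ring
  map_smul' c X := by
    ext i x <;>
    · simp [Matrix.smul_mulVec, Matrix.transpose_smul, Fin.init]
      ring

lemma motionMap_apply {P L : Type*} (p : P → Fin 2 → ℝ) (l : L → Fin 2 → ℝ)
    (X : Matrix (Fin 3) (Fin 3) ℝ) :
    motionMap p l X = (fun i => Fin.init (X *ᵥ hat (p i)) - (X *ᵥ hat (p i)) 2 • p i,
              fun j => -(Fin.init (Xᵀ *ᵥ hat (l j))) + (Xᵀ *ᵥ hat (l j)) 2 • l j) := rfl

lemma motionMap_range_eq {P L : Type*} (p : P → Fin 2 → ℝ) (l : L → Fin 2 → ℝ) :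
    ((LinearMap.range (motionMap p l) : Submodule ℝ _) :
      Set ((P → Fin 2 → ℝ) × (L → Fin 2 → ℝ))) = {m | IsTrivMotion p l m.1 m.2} := by
  ext m
  constructor
  · rintro ⟨X, rfl⟩
    exact ⟨X, fun i => rfl, fun j => rfl⟩
  · rintro ⟨X, h1, h2⟩
    exact ⟨X, Prod.ext (funext fun i => (h1 i).symm) (funext fun j => (h2 j).symm)⟩

lemma smul_one_mem_ker {P L : Type*} (p : P → Fin 2 → ℝ) (l : L → Fin 2 → ℝ) (c : ℝ) :
    (c • (1 : Matrix (Fin 3) (Fin 3) ℝ)) ∈ LinearMap.ker (motionMap p l) := by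
  have hmv : ∀ w : Fin 3 → ℝ, (c • (1 : Matrix (Fin 3) (Fin 3) ℝ)) *ᵥ w = c • w := by
    intro w; rw [Matrix.smul_mulVec, Matrix.one_mulVec]
  have hT : (c • (1 : Matrix (Fin 3) (Fin 3) ℝ))ᵀ = c • 1 := by
    rw [Matrix.transpose_smul, Matrix.transpose_one]
  rw [LinearMap.mem_ker, motionMap_apply, hT]
  refine Prod.ext (funext fun i => ?_) (funext fun j => ?_) <;>
  · simp only [hmv, init_smul', hat_init, Pi.smul_apply, hat_two, smul_eq_mul, mul_one,
      smul_smul]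
    show _ = (0 : _)
    simp [smul_smul]

/-- Theorem. (i) If `v₁, v₂, v₃, v₄ ∈ ℝ³` are four vectors any three of which are
linearly independent, and `X` is a `3 × 3` real matrix with `X vₖ ∈ span {vₖ}` for
each `k`, then `X` is a scalar multiple of the identity.
(ii) Consequently, if an affine realization `(p, l)` of `(P, L, I)` has four points
whose homogenizations are three-by-three linearly independent, then the set of
trivial infinitesimal motions of `(p, l)` is a linear subspace of
`(ℝ²)^P × (ℝ²)^L` of dimension exactly `8`. -/
theorem scalar_matrix_and_trivial_motions_dim_eq_eight
    {P L : Type*} [Fintype P] [Fintype L] (I : Set (P × L))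
    (p : P → Fin 2 → ℝ) (l : L → Fin 2 → ℝ)
    (hreal : IsAffRealization I p l)
    (i₁ i₂ i₃ i₄ : P)
    (hindep : ∀ k₁ k₂ k₃ : Fin 4, k₁ ≠ k₂ → k₁ ≠ k₃ → k₂ ≠ k₃ →
      LinearIndependent ℝ
        ![![hat (p i₁), hat (p i₂), hat (p i₃), hat (p i₄)] k₁,
          ![hat (p i₁), hat (p i₂), hat (p i₃), hat (p i₄)] k₂,
          ![hat (p i₁), hat (p i₂), hat (p i₃), hat (p i₄)] k₃]) :
    (∀ (v : Fin 4 → Fin 3 → ℝ) (X : Matrix (Fin 3) (Fin 3) ℝ),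
      (∀ k₁ k₂ k₃ : Fin 4, k₁ ≠ k₂ → k₁ ≠ k₃ → k₂ ≠ k₃ →
        LinearIndependent ℝ ![v k₁, v k₂, v k₃]) →
      (∀ k, ∃ c : ℝ, X *ᵥ v k = c • v k) →
      ∃ c : ℝ, X = c • (1 : Matrix (Fin 3) (Fin 3) ℝ)) ∧
    (∃ W : Submodule ℝ ((P → Fin 2 → ℝ) × (L → Fin 2 → ℝ)),
      (W : Set ((P → Fin 2 → ℝ) × (L → Fin 2 → ℝ)))
        = {m | IsTrivMotion p l m.1 m.2} ∧
      Module.finrank ℝ W = 8) := by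
  refine ⟨fun v X h1 h2 => scalarOf v X h1 h2, ?_⟩
  refine ⟨LinearMap.range (motionMap p l), motionMap_range_eq p l, ?_⟩
  -- kernel is the line of scalar matrices
  have hker : LinearMap.ker (motionMap p l)
      = Submodule.span ℝ {(1 : Matrix (Fin 3) (Fin 3) ℝ)} := by
    apply le_antisymm
    · intro X hX
      -- each hat (p iₖ) is an eigenvector of X
      have hX1 := congrFun (congrArg Prod.fst (LinearMap.mem_ker.mp hX))
      have heig : ∀ k : Fin 4,
          ∃ c : ℝ, X *ᵥ ![hat (p i₁), hat (p i₂), hat (p i₃), hat (p i₄)] k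
            = c • ![hat (p i₁), hat (p i₂), hat (p i₃), hat (p i₄)] k := by
        intro k
        have key : ∀ i : P, ∃ c : ℝ, X *ᵥ hat (p i) = c • hat (p i) := by
          intro i
          have h := hX1 i
          rw [motionMap_apply] at h
          have h' : Fin.init (X *ᵥ hat (p i)) = (X *ᵥ hat (p i)) 2 • p i := by
            have : Fin.init (X *ᵥ hat (p i)) - (X *ᵥ hat (p i)) 2 • p i = 0 := h
            linear_combination (norm := module) this
          exact ⟨(X *ᵥ hat (p i)) 2, eig_of (p i) _ h'⟩
        fin_cases k
        · simpa using key i₁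
        · simpa using key i₂
        · simpa using key i₃
        · simpa using key i₄
      obtain ⟨c, hcX⟩ := scalarOf _ X hindep heig
      rw [Submodule.mem_span_singleton]
      exact ⟨c, by rw [← hcX]⟩
    · rw [Submodule.span_le, Set.singleton_subset_iff]
      simpa using smul_one_mem_ker p l 1
  have hkrank : Module.finrank ℝ (LinearMap.ker (motionMap p l)) = 1 := by
    rw [hker]
    exact finrank_span_singleton one_ne_zero
  have hrn := LinearMap.finrank_range_add_finrank_ker (motionMap p l)
  rw [hkrank] at hrn
  have hdom : Module.finrank ℝ (Matrix (Fin 3) (Fin 3) ℝ) = 9 := by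
    simp [Module.finrank_matrix]
  omega
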